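/- Let G be an ancestral graph and let X, Y be disjoint node sets. If Z and Z ∪ Zₙ are m-separators relative to (X,Y), where Zₙ = {Z₁, …, Zₙ} is a set of n nodes disjoint from Z ∪ X ∪ Y, then there exists a chain of subsets Z₁′ ⊂ Z₂′ ⊂ … ⊂ Zₙ₋₁′ ⊂ Zₙ with |Zᵢ′| = i for each i ∈ {1,…,n−1} such that every set Z ∪ Zᵢ′ is an m-separator relative to (X,Y). -/

import Mathlib

/-!
Common definitions: mixed graphs, walks, colliders, m-separation,
ancestral graphs, DAGs, MAGs, proper causal paths, adjustment criteria,
inducing paths, and MAG marginalization.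
-/

universe u

/-- The four possible kinds of edges of a mixed graph, oriented along the
direction of traversal: `u → v`, `u ← v`, `u ↔ v`, `u − v`. -/
inductive EType where
  | right : EType
  | left : EType
  | both : EType
  | undirEdge : EType
deriving DecidableEq

namespace EType

/-- The edge has an arrowhead at its first endpoint. -/
def headFst : EType → Prop
  | .left => True
  | .both => True
  | _ => False

/-- The edge has an arrowhead at its second endpoint. -/
def headSnd : EType → Prop
  | .right => True
  | .both => True
  | _ => False

end EType

/-- A mixed graph with directed, bidirected and undirected edges. -/
structure MixedGraph (V : Type u) where
  dir : V → V → Prop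
  bi : V → V → Prop
  undir : V → V → Prop
  bi_symm : ∀ u v, bi u v → bi v u
  undir_symm : ∀ u v, undir u v → undir v u

namespace MixedGraph

variable {V : Type u}

/-- `G.IsEdge e u v` holds if the graph contains the edge `e` from `u` to `v`
(read in the direction of traversal). -/
def IsEdge (G : MixedGraph V) : EType → V → V → Prop
  | .right, u, v => G.dir u v
  | .left, u, v => G.dir v u
  | .both, u, v => G.bi u v
  | .undirEdge, u, v => G.undir u v

/-- Walks in a mixed graph, remembering the type of every traversed edge. -/
inductive Walk (G : MixedGraph V) : V → V → Type u
  | nil (v : V) : Walk G v v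
  | cons (u v w : V) (e : EType) (h : G.IsEdge e u v) (p : Walk G v w) : Walk G u w

namespace Walk

variable {G : MixedGraph V}

/-- The list of nodes visited by a walk (with multiplicity). -/
def support : {a b : V} → G.Walk a b → List V
  | _, _, .nil v => [v]
  | _, _, .cons u _ _ _ _ p => u :: p.support

/-- A path is a walk without repeated nodes. -/
def IsPath {a b : V} (p : G.Walk a b) : Prop := p.support.Nodup

/-- Auxiliary m-connectivity check: `ph` records whether the previous edge of
the walk has an arrowhead at the current start node.  At every interior node,
the node must be a collider (two arrowheads meet) iff it belongs to `Z`. -/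
def connFrom (Z : Set V) : Prop → {a b : V} → G.Walk a b → Prop
  | _, _, _, .nil _ => True
  | ph, _, _, .cons u _ _ e _ p =>
      ((ph ∧ e.headFst) ↔ u ∈ Z) ∧ p.connFrom Z e.headSnd

/-- The walk m-connects its endpoints given `Z`: all colliders and only
colliders on it are in `Z`. -/
def ConnBy (Z : Set V) : {a b : V} → G.Walk a b → Prop
  | _, _, .nil _ => True
  | _, _, .cons _ _ _ e _ p => p.connFrom Z e.headSnd

/-- A causal (directed) walk: every edge points towards the end node. -/
def IsCausal : {a b : V} → G.Walk a b → Prop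
  | _, _, .nil _ => True
  | _, _, .cons _ _ _ e _ p => e = EType.right ∧ p.IsCausal

/-- A walk is proper w.r.t. `X` if only its start node may belong to `X`. -/
def ProperFrom (X : Set V) : {a b : V} → G.Walk a b → Prop
  | _, _, .nil _ => True
  | _, _, .cons _ _ _ _ _ p => ∀ n ∈ p.support, n ∉ X

/-- Concatenation of walks. -/
def append : {a b c : V} → G.Walk a b → G.Walk b c → G.Walk a c
  | _, _, _, .nil _, q => q
  | _, _, _, .cons u v _ e h p, q => .cons u v _ e h (p.append q)

/-- The walk is nonempty and its first edge has an arrowhead at the start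
node. -/
def headAtStart : {a b : V} → G.Walk a b → Prop
  | _, _, .nil _ => False
  | _, _, .cons _ _ _ e _ _ => e.headFst

/-- The walk is nonempty and its last edge has an arrowhead at the end node. -/
def headAtEnd : {a b : V} → G.Walk a b → Prop
  | _, _, .nil _ => False
  | _, _, .cons _ _ _ e _ (.nil _) => e.headSnd
  | _, _, .cons _ _ _ _ _ p => p.headAtEnd

/-- `P` holds of every (ordered) pair of consecutive nodes of the walk. -/
def edgeProp (P : V → V → Prop) : {a b : V} → G.Walk a b → Prop
  | _, _, .nil _ => True
  | _, _, .cons u v _ _ _ p => P u v ∧ p.edgeProp P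

end Walk

/-- `x` and `y` are m-connected given `Z`: there is a walk between them on
which all colliders and only colliders are in `Z`. -/
def MConn (G : MixedGraph V) (Z : Set V) (x y : V) : Prop :=
  ∃ p : G.Walk x y, p.ConnBy Z

/-- `Z` m-separates the node sets `X` and `Y`. -/
def MSep (G : MixedGraph V) (X Y Z : Set V) : Prop :=
  ∀ x ∈ X, ∀ y ∈ Y, ¬ G.MConn Z x y

/-- `Z` is an m-separator relative to `(X, Y)`: it is disjoint from `X ∪ Y`
and m-separates `X` and `Y`. -/
def IsMSep (G : MixedGraph V) (X Y Z : Set V) : Prop :=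
  Disjoint Z (X ∪ Y) ∧ G.MSep X Y Z

/-- An `M`-minimal m-separator relative to `(X, Y)`. -/
def IsMinMSep (G : MixedGraph V) (X Y M Z : Set V) : Prop :=
  G.IsMSep X Y Z ∧ M ⊆ Z ∧ ∀ Z', Z' ⊂ Z → M ⊆ Z' → ¬ G.IsMSep X Y Z'

/-- One step of the anterior relation: a directed or undirected edge. -/
def antEdge (G : MixedGraph V) (u v : V) : Prop := G.dir u v ∨ G.undir u v

/-- `u` is an anterior of `v` (every node is its own anterior). -/
def Anterior (G : MixedGraph V) (u v : V) : Prop :=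
  Relation.ReflTransGen G.antEdge u v

/-- The set of anteriors of nodes of `W`. -/
def Ant (G : MixedGraph V) (W : Set V) : Set V := {u | ∃ w ∈ W, G.Anterior u w}

/-- `v` is a descendant of `u`, i.e. there is a directed path `u → ⋯ → v`
(every node is its own descendant/ancestor). -/
def Anc (G : MixedGraph V) (u v : V) : Prop := Relation.ReflTransGen G.dir u v

/-- The set of descendants of nodes of `W`. -/
def De (G : MixedGraph V) (W : Set V) : Set V := {v | ∃ w ∈ W, G.Anc w v}

/-- The set of ancestors of nodes of `W`. -/
def AnSet (G : MixedGraph V) (W : Set V) : Set V := {v | ∃ w ∈ W, G.Anc v w}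

/-- An ancestral graph: (1) for each edge `a ← b` or `a ↔ b`, `a` is not an
anterior of `b`; (2) for each edge `a − b` there is no edge `a ← c`, `a ↔ c`,
`b ← c` or `b ↔ c`. -/
def IsAG (G : MixedGraph V) : Prop :=
  (∀ a b, G.dir b a ∨ G.bi a b → ¬ G.Anterior a b) ∧
  (∀ a b, G.undir a b →
    ∀ c, ¬ G.dir c a ∧ ¬ G.bi a c ∧ ¬ G.dir c b ∧ ¬ G.bi b c)

/-- A DAG: only directed edges, and no directed cycles. -/
def IsDAG (G : MixedGraph V) : Prop :=
  (∀ u v, ¬ G.bi u v) ∧ (∀ u v, ¬ G.undir u v) ∧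
  (∀ v, ¬ Relation.TransGen G.dir v v)

/-- Two nodes are adjacent if they are joined by some edge. -/
def Adjacent (G : MixedGraph V) (u v : V) : Prop :=
  G.dir u v ∨ G.dir v u ∨ G.bi u v ∨ G.undir u v

/-- A maximal ancestral graph (MAG): only directed and bidirected edges, no
directed cycle, no almost-directed cycle, and every pair of non-adjacent
nodes can be m-separated by some set of the remaining nodes. -/
def IsMAG (G : MixedGraph V) : Prop :=
  (∀ u v, ¬ G.undir u v) ∧
  (∀ v, ¬ Relation.TransGen G.dir v v) ∧
  (∀ u v, G.bi u v → ¬ Relation.TransGen G.dir v u) ∧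
  (∀ u v, u ≠ v → ¬ G.Adjacent u v →
    ∃ Z : Set V, u ∉ Z ∧ v ∉ Z ∧ ¬ G.MConn Z u v)

/-- `PCP G X Y`: the set of nodes, excluding nodes of `X`, that lie on a
proper causal path from `X` to `Y`. -/
def PCP (G : MixedGraph V) (X Y : Set V) : Set V :=
  {w | w ∉ X ∧ ∃ x ∈ X, ∃ y ∈ Y, ∃ p : G.Walk x y,
    p.IsPath ∧ p.IsCausal ∧ p.ProperFrom X ∧ w ∈ p.support}

/-- `Dpcp G X Y`: the descendants of nodes on proper causal paths. -/
def Dpcp (G : MixedGraph V) (X Y : Set V) : Set V := G.De (G.PCP X Y)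

/-- Remove from `G` all edges into `A` and all edges out of `B`. -/
def rmInOut (G : MixedGraph V) (A B : Set V) : MixedGraph V where
  dir u v := G.dir u v ∧ v ∉ A ∧ u ∉ B
  bi u v := G.bi u v ∧ u ∉ A ∧ v ∉ A
  undir u v := G.undir u v ∧ u ∉ B ∧ v ∉ B
  bi_symm := fun u v h => ⟨G.bi_symm u v h.1, h.2.2, h.2.1⟩
  undir_symm := fun u v h => ⟨G.undir_symm u v h.1, h.2.2, h.2.1⟩

/-- The parametrized proper back-door graph: remove every edge `x → d` with
`x ∈ X` and `d ∈ PCP(X,Y) ∪ C`. -/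
def pbdC (G : MixedGraph V) (X Y C : Set V) : MixedGraph V where
  dir u v := G.dir u v ∧ ¬(u ∈ X ∧ v ∈ G.PCP X Y ∪ C)
  bi := G.bi
  undir := G.undir
  bi_symm := G.bi_symm
  undir_symm := G.undir_symm

/-- The proper back-door graph. -/
def pbd (G : MixedGraph V) (X Y : Set V) : MixedGraph V := G.pbdC X Y ∅

/-- The adjustment criterion (AC) in a DAG: (a) no element of `Z` is a
descendant in `G_{X̄}` of a node outside `X` lying on a proper causal path
from `X` to `Y`; (b) every proper non-causal path from `X` to `Y` is blocked
by `Z`. -/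
def SatisfiesACdag (G : MixedGraph V) (X Y Z : Set V) : Prop :=
  (∀ z ∈ Z, z ∉ (G.rmInOut X ∅).De (G.PCP X Y)) ∧
  (∀ x ∈ X, ∀ y ∈ Y, ∀ p : G.Walk x y,
    p.IsPath → p.ProperFrom X → ¬ p.IsCausal → ¬ p.ConnBy Z)

/-- The adjustment criterion (AC) in a MAG: (a) no element of `Z` is a
descendant in `M` of a node outside `X` lying on a proper causal path from
`X` to `Y`; (b) every proper non-causal path from `X` to `Y` is blocked by
`Z`. -/
def SatisfiesACmag (G : MixedGraph V) (X Y Z : Set V) : Prop :=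
  (∀ z ∈ Z, z ∉ G.Dpcp X Y) ∧
  (∀ x ∈ X, ∀ y ∈ Y, ∀ p : G.Walk x y,
    p.IsPath → p.ProperFrom X → ¬ p.IsCausal → ¬ p.ConnBy Z)

/-- The constructive back-door criterion (CBC): (a) `Z` avoids
`Dpcp(X,Y)`; (b) `Z` m-separates `X` and `Y` in the proper back-door
graph. -/
def SatisfiesCBC (G : MixedGraph V) (X Y Z : Set V) : Prop :=
  (∀ z ∈ Z, z ∉ G.Dpcp X Y) ∧ (G.pbd X Y).MSep X Y Z

/-- The parametrized constructive back-door criterion CBC(A,B,C). -/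
def SatisfiesCBCP (G : MixedGraph V) (X Y Z A B C : Set V) : Prop :=
  (∀ z ∈ Z, z ∉ (G.rmInOut A B).De (G.PCP X Y)) ∧ (G.pbdC X Y C).MSep X Y Z

namespace Walk

variable {G : MixedGraph V}

/-- Auxiliary check for inducing paths: every interior non-collider is in
`L`, and every interior collider is an ancestor of a node of `T`.  `ph`
records whether the previous edge has an arrowhead at the current node. -/
def indFrom (L T : Set V) : Prop → {a b : V} → G.Walk a b → Prop
  | _, _, _, .nil _ => True
  | ph, _, _, .cons u _ _ e _ p =>
      ((ph ∧ e.headFst) → ∃ t ∈ T, Relation.ReflTransGen G.dir u t) ∧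
      (¬(ph ∧ e.headFst) → u ∈ L) ∧ p.indFrom L T e.headSnd

/-- Interior conditions for inducing paths (endpoints are exempt). -/
def indBody (L T : Set V) : {a b : V} → G.Walk a b → Prop
  | _, _, .nil _ => True
  | _, _, .cons _ _ _ e _ p => p.indFrom L T e.headSnd

end Walk

/-- `p` is an inducing path with respect to `Z` and `L`: a path on which
every non-collider other than the endpoints is in `L` and every collider is
an ancestor of the endpoints or of `Z`. -/
def IsInducing (G : MixedGraph V) (Z L : Set V) {a b : V} (p : G.Walk a b) : Prop :=
  p.IsPath ∧ p.indBody L ({a, b} ∪ Z)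

/-- Adjacency in the MAG `G[∅_L`: `u, v ∉ L` are adjacent iff they cannot be
d-separated in `G` by any set `W ⊆ V∖L` (not containing `u, v`). -/
def magAdj (G : MixedGraph V) (L : Set V) (u v : V) : Prop :=
  u ∉ L ∧ v ∉ L ∧ u ≠ v ∧
  ∀ W : Set V, Disjoint W L → u ∉ W → v ∉ W → (G.MConn W u v ∧ G.MConn W v u)

/-- The MAG `G[∅_L` obtained from the DAG `G` by marginalizing `L`: adjacent
`u, v` are joined by `u → v` if `u` is an ancestor of `v` in `G` and `v` is
not an ancestor of `u`, and by `u ↔ v` if neither is an ancestor of the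
other. -/
def mag (G : MixedGraph V) (L : Set V) : MixedGraph V where
  dir u v := G.magAdj L u v ∧ G.Anc u v ∧ ¬ G.Anc v u
  bi u v := G.magAdj L u v ∧ ¬ G.Anc u v ∧ ¬ G.Anc v u
  undir _ _ := False
  bi_symm := fun u v h =>
    ⟨⟨h.1.2.1, h.1.1, h.1.2.2.1.symm,
      fun W hW hv hu => ⟨(h.1.2.2.2 W hW hu hv).2, (h.1.2.2.2 W hW hu hv).1⟩⟩,
      h.2.2, h.2.1⟩
  undir_symm := fun _ _ h => h.elim

/-- An inducing `Z`-trail in the MAG `G[∅_L`: a path whose interior nodes are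
exactly the `Z`-nodes on it, each consecutive pair being linked in `G` by an
inducing path w.r.t. `∅, L` which has arrowheads at the interior nodes. -/
def IsInducingZTrail (G : MixedGraph V) (Z L : Set V) {a b : V}
    (p : (G.mag L).Walk a b) : Prop :=
  p.IsPath ∧ a ∉ Z ∧ b ∉ Z ∧
  (∀ v ∈ p.support, v ≠ a → v ≠ b → v ∈ Z) ∧
  p.edgeProp (fun u v => ∃ q : G.Walk u v, G.IsInducing ∅ L q ∧
    (u ∈ Z → q.headAtStart) ∧ (v ∈ Z → q.headAtEnd))

end MixedGraph

open MixedGraph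

variable {V : Type u}


section AuxChain

open MixedGraph

variable {V : Type u}

/-- Walk-with-endpoints-exposed predicate: `TW G Z u a b w` means there is a
nonempty walk from `u` to `w` whose first edge has head-at-`u` given by `a`,
last edge has head-at-`w` given by `b`, and every interior node is a collider
iff it belongs to `Z`. -/
inductive TW (G : MixedGraph V) (Z : Set V) : V → Prop → Prop → V → Prop where
  | single {u v : V} {e : EType} (h : G.IsEdge e u v) : TW G Z u e.headFst e.headSnd v
  | cons {u v w : V} {e : EType} {a b : Prop} (h : G.IsEdge e u v)
      (hc : (e.headSnd ∧ a) ↔ v ∈ Z) (t : TW G Z v a b w) : TW G Z u e.headFst b w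

/-- Edge reversal. -/
def esymm : EType → EType
  | .right => .left
  | .left => .right
  | .both => .both
  | .undirEdge => .undirEdge

variable {G : MixedGraph V}

lemma isEdge_esymm {e : EType} {u v : V} (h : G.IsEdge e u v) :
    G.IsEdge (esymm e) v u := by
  cases e with
  | right => exact h
  | left => exact h
  | both => exact G.bi_symm _ _ h
  | undirEdge => exact G.undir_symm _ _ h

lemma headFst_esymm (e : EType) : (esymm e).headFst = e.headSnd := by cases e <;> rfl
lemma headSnd_esymm (e : EType) : (esymm e).headSnd = e.headFst := by cases e <;> rfl

lemma TW.append {Z : Set V} {u v w : V} {a b c d : Prop}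
    (t1 : TW G Z u a b v) (hj : (b ∧ c) ↔ v ∈ Z) (t2 : TW G Z v c d w) :
    TW G Z u a d w := by
  induction t1 with
  | single h => exact TW.cons h hj t2
  | cons h hc t ih => exact TW.cons h hc (ih hj t2)

lemma TW.symm {Z : Set V} {u w : V} {a b : Prop} (t : TW G Z u a b w) :
    TW G Z w b a u := by
  induction t with
  | single h =>
      have := TW.single (G := G) (Z := Z) (isEdge_esymm h)
      rwa [headFst_esymm, headSnd_esymm] at this
  | cons h hc t ih =>
      have hs := TW.single (G := G) (Z := Z) (isEdge_esymm h)
      rw [headFst_esymm, headSnd_esymm] at hs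
      exact ih.append (by rw [and_comm]; exact hc) hs

/-- The end of a `TW` with `b` true has an arrowhead pointing at it. -/
lemma TW.arrow_end {Z : Set V} {u w : V} {a b : Prop} (t : TW G Z u a b w) (hb : b) :
    ∃ z, G.dir z w ∨ G.bi z w := by
  induction t with
  | single h =>
      rename_i u' v' e
      cases e with
      | right => exact ⟨u', Or.inl h⟩
      | left => exact absurd hb (by simp [EType.headSnd])
      | both => exact ⟨u', Or.inr h⟩
      | undirEdge => exact absurd hb (by simp [EType.headSnd])
  | cons h hc t ih => exact ih hb

lemma TW.arrow_start {Z : Set V} {u w : V} {a b : Prop} (t : TW G Z u a b w) (ha : a) :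
    ∃ z, G.dir z u ∨ G.bi z u := t.symm.arrow_end ha

end AuxChain
section AuxChain2

open MixedGraph

variable {V : Type u}

/-- Connectivity automaton matching `Walk.connFrom`. -/
inductive CF (G : MixedGraph V) (Z : Set V) : Prop → V → V → Prop where
  | nil {ph : Prop} {v : V} : CF G Z ph v v
  | cons {ph : Prop} {u v w : V} {e : EType} (h : G.IsEdge e u v)
      (hc : (ph ∧ e.headFst) ↔ u ∈ Z) (t : CF G Z e.headSnd v w) : CF G Z ph u w

variable {G : MixedGraph V}

lemma connFrom_CF {Z : Set V} :
    ∀ {u w : V} (p : G.Walk u w) (ph : Prop), p.connFrom Z ph → CF G Z ph u w := by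
  intro u w p
  induction p with
  | nil v => intro ph _; exact CF.nil
  | cons u v w e h p ih =>
      intro ph hp
      obtain ⟨hc, hrest⟩ := hp
      exact CF.cons h hc (ih _ hrest)

lemma CF_exists_walk {Z : Set V} {ph : Prop} {u w : V} (t : CF G Z ph u w) :
    ∃ p : G.Walk u w, p.connFrom Z ph := by
  induction t with
  | nil => exact ⟨.nil _, trivial⟩
  | cons h hc t ih =>
      obtain ⟨p, hp⟩ := ih
      exact ⟨.cons _ _ _ _ h p, ⟨hc, hp⟩⟩

lemma CF_TW {Z : Set V} {ph : Prop} {v y : V} (t : CF G Z ph v y) :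
    v = y ∨ ∃ a b : Prop, TW G Z v a b y ∧ ((ph ∧ a) ↔ v ∈ Z) := by
  induction t with
  | nil => exact Or.inl rfl
  | cons h hc t ih =>
      rename_i ph' u' v' w' e
      right
      rcases ih with rfl | ⟨a, b, tw, hc2⟩
      · exact ⟨e.headFst, e.headSnd, TW.single h, hc⟩
      · exact ⟨e.headFst, b, TW.cons h hc2 tw, hc⟩

lemma TW_CF {Z : Set V} {u y : V} {a b : Prop} (t : TW G Z u a b y) :
    ∀ {ph : Prop}, ((ph ∧ a) ↔ u ∈ Z) → CF G Z ph u y := by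
  induction t with
  | single h => intro ph hc; exact CF.cons h hc CF.nil
  | cons h hc t ih => intro ph hc'; exact CF.cons h hc' (ih hc)

lemma mconn_iff_TW {Z : Set V} {x y : V} :
    G.MConn Z x y ↔ (x = y ∨ ∃ a b : Prop, TW G Z x a b y) := by
  constructor
  · rintro ⟨p, hp⟩
    cases p with
    | nil v => exact Or.inl rfl
    | cons u v w e h p =>
        right
        have hcf : CF G Z e.headSnd v y := connFrom_CF p _ hp
        rcases CF_TW hcf with rfl | ⟨a, b, tw, hc2⟩
        · exact ⟨e.headFst, e.headSnd, TW.single h⟩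
        · exact ⟨e.headFst, b, TW.cons h hc2 tw⟩
  · rintro (rfl | ⟨a, b, tw⟩)
    · exact ⟨.nil _, trivial⟩
    · cases tw with
      | single h => exact ⟨.cons _ _ _ _ h (.nil _), trivial⟩
      | cons h hc t =>
          obtain ⟨p, hp⟩ := CF_exists_walk (TW_CF t hc)
          exact ⟨.cons _ _ _ _ h p, hp⟩

end AuxChain2
section AuxChain3

open MixedGraph

variable {V : Type u} {G : MixedGraph V}

/-- Split a `Z ∪ {v}`-connecting trail at the first occurrence of `v`. -/
lemma TW.firstV {Z : Set V} {v u w : V} {a b : Prop}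
    (t : TW G (Z ∪ {v}) u a b w) :
    v ≠ u → TW G Z u a b w ∨
      ∃ c d : Prop, (c ∧ d) ∧ TW G Z u a c v ∧ TW G (Z ∪ {v}) v d b w := by
  induction t with
  | single h => intro _; exact Or.inl (TW.single h)
  | cons h hc t ih =>
      rename_i u' m w' e a' b'
      intro hvu
      by_cases hvm : v = m
      · subst hvm
        exact Or.inr ⟨e.headSnd, a', hc.mpr (Or.inr rfl), TW.single h, t⟩
      · have hmem : m ∈ Z ∪ {v} ↔ m ∈ Z := by
          simp only [Set.mem_union, Set.mem_singleton_iff]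
          exact or_iff_left (fun h => hvm h.symm)
        rcases ih hvm with t' | ⟨c, d, hcd, pre, suf⟩
        · exact Or.inl (TW.cons h (hc.trans hmem) t')
        · exact Or.inr ⟨c, d, hcd, TW.cons h (hc.trans hmem) pre, suf⟩

lemma TW.lastV {Z : Set V} {v x y : V} {a b : Prop}
    (t : TW G (Z ∪ {v}) x a b y) (hvy : v ≠ y) :
    TW G Z x a b y ∨
      ∃ c d : Prop, (c ∧ d) ∧ TW G (Z ∪ {v}) x a c v ∧ TW G Z v d b y := by
  rcases t.symm.firstV hvy with t' | ⟨c, d, hcd, pre, suf⟩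
  · exact Or.inl t'.symm
  · exact Or.inr ⟨d, c, ⟨hcd.2, hcd.1⟩, suf.symm, pre.symm⟩

/-- Transfer a trail between conditioning sets, or find a witness node where
they differ, occurring as an interior node. -/
lemma TW.transfer {Z1 Z2 : Set V} {u w : V} {a b : Prop}
    (t : TW G Z1 u a b w) :
    TW G Z2 u a b w ∨
      ∃ (s : V) (c d : Prop), ¬(s ∈ Z1 ↔ s ∈ Z2) ∧ ((c ∧ d) ↔ s ∈ Z1) ∧
        TW G Z1 u a c s ∧ TW G Z1 s d b w := by
  induction t with
  | single h => exact Or.inl (TW.single h)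
  | cons h hc t ih =>
      rename_i u' m w' e a' b'
      by_cases hm : m ∈ Z1 ↔ m ∈ Z2
      · rcases ih with t' | ⟨s, c, d, hns, hcd, pre, suf⟩
        · exact Or.inl (TW.cons h (hc.trans hm) t')
        · exact Or.inr ⟨s, c, d, hns, hcd, TW.cons h hc pre, suf⟩
      · exact Or.inr ⟨m, e.headSnd, a', hm, hc, TW.single h, t⟩

/-- From a node leaving a connecting trail with a tail, the node is an
anterior of the conditioning set or of the far endpoint (in ancestral graphs). -/
lemma TW.tail_ant (hAG : G.IsAG) {Z : Set V} {u w : V} {a b : Prop}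
    (t : TW G Z u a b w) (hna : ¬a) : u ∈ G.Ant (Z ∪ {w}) := by
  induction t with
  | single h =>
      rename_i u' v' e
      cases e with
      | right => exact ⟨v', Or.inr rfl, Relation.ReflTransGen.single (Or.inl h)⟩
      | left => exact absurd trivial hna
      | both => exact absurd trivial hna
      | undirEdge => exact ⟨v', Or.inr rfl, Relation.ReflTransGen.single (Or.inr h)⟩
  | cons h hc t ih =>
      rename_i u' m w' e a' b'
      have hstep : G.antEdge u' m := by
        cases e with
        | right => exact Or.inl h
        | left => exact absurd trivial hna
        | both => exact absurd trivial hna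
        | undirEdge => exact Or.inr h
      by_cases hm : m ∈ Z
      · exact ⟨m, Or.inl hm, Relation.ReflTransGen.single hstep⟩
      · have hna' : ¬a' := by
          cases e with
          | right =>
              intro ha'
              exact hm (hc.mp ⟨trivial, ha'⟩)
          | left => exact absurd trivial hna
          | both => exact absurd trivial hna
          | undirEdge =>
              intro ha'
              obtain ⟨z, hz⟩ := t.arrow_start ha'
              rcases hz with hz | hz
              · exact (hAG.2 u' m h z).2.2.1 hz
              · exact (hAG.2 u' m h z).2.2.2 (G.bi_symm _ _ hz)
        obtain ⟨tgt, htgt, hant⟩ := ih hna'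
        exact ⟨tgt, htgt, Relation.ReflTransGen.head hstep hant⟩

/-- An anterior path starting at a node with an arrowhead is fully directed. -/
lemma anterior_dir_of_arrow (hAG : G.IsAG) {v t : V}
    (hant : G.Anterior v t) (harr : ∃ z, G.dir z v ∨ G.bi z v) :
    Relation.ReflTransGen G.dir v t := by
  induction hant using Relation.ReflTransGen.head_induction_on with
  | refl => exact Relation.ReflTransGen.refl
  | head hstep hrest ih =>
      rename_i a c
      rcases hstep with hd | hu
      · exact Relation.ReflTransGen.head hd (ih ⟨a, Or.inl hd⟩)
      · obtain ⟨z, hz⟩ := harr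
        rcases hz with hz | hz
        · exact absurd hz (hAG.2 a c hu z).1
        · exact absurd (G.bi_symm _ _ hz) (hAG.2 a c hu z).2.1

/-- Directed escape route whose interior avoids `B`. -/
inductive DirTo (G : MixedGraph V) (B : Set V) : V → V → Prop where
  | base {v t : V} : v ∉ B → t ∈ B → G.dir v t → DirTo G B v t
  | cons {v m t : V} : v ∉ B → G.dir v m → DirTo G B m t → DirTo G B v t

lemma DirTo.start_not_mem {B : Set V} {v t : V} (h : DirTo G B v t) : v ∉ B := by
  cases h with
  | base h1 _ _ => exact h1
  | cons h1 _ _ => exact h1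

lemma dir_reach_first {B : Set V} {v t : V}
    (h : Relation.ReflTransGen G.dir v t) (ht : t ∈ B) :
    v ∈ B ∨ ∃ t' ∈ B, DirTo G B v t' := by
  induction h using Relation.ReflTransGen.head_induction_on with
  | refl => exact Or.inl ht
  | head hstep hrest ih =>
      rename_i a c
      by_cases ha : a ∈ B
      · exact Or.inl ha
      · right
        rcases ih with hc | ⟨t', ht', hdt⟩
        · exact ⟨c, hc, DirTo.base ha hc hstep⟩
        · exact ⟨t', ht', DirTo.cons ha hstep hdt⟩

lemma not_headFst_right : ¬ (EType.right.headFst) := by simp [EType.headFst]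

lemma DirTo.toTW_fwd {B Z : Set V} (hZB : Z ⊆ B) {v t : V} (h : DirTo G B v t) :
    TW G Z v False True t := by
  induction h with
  | base h1 h2 hd =>
      exact (TW.single (e := .right) hd : TW G Z _ _ _ _)
  | cons h1 hd hrest ih =>
      have hm : _ ∉ Z := fun hx => hrest.start_not_mem (hZB hx)
      exact (TW.cons (e := .right) hd (iff_of_false (by simp) hm) ih : TW G Z _ _ _ _)

lemma DirTo.toTW_bwd {B Z : Set V} (hZB : Z ⊆ B) {v t : V} (h : DirTo G B v t) :
    TW G Z t True False v := (h.toTW_fwd hZB).symm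

/-- No anterior cycle through a node with an arrowhead. -/
lemma no_ant_cycle (hAG : G.IsAG) {v s : V} (hvs : G.Anterior v s)
    (hsv : G.Anterior s v) (hne : v ≠ s) (harr : ∃ z, G.dir z v ∨ G.bi z v) :
    False := by
  have hdir : Relation.ReflTransGen G.dir v s := anterior_dir_of_arrow hAG hvs harr
  rcases hdir.cases_head with rfl | ⟨m, hvm, hms⟩
  · exact hne rfl
  · have hmv : G.Anterior m v :=
      Relation.ReflTransGen.trans (by clear hdir hvs hsv hne; induction hms with
        | refl => exact Relation.ReflTransGen.refl
        | tail _ h ih => exact ih.tail (Or.inl h) : G.Anterior m s) hsv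
    exact hAG.1 m v (Or.inl hvm) hmv

end AuxChain3
section AuxChain4

open MixedGraph

variable {V : Type u} {G : MixedGraph V}

/-- Adding a single anterior node to an m-separator keeps it an m-separator. -/
lemma msep_insert_ant (hAG : G.IsAG) {X Y Z : Set V} (hXY : Disjoint X Y)
    (hZ : G.MSep X Y Z) {v : V} (hv : v ∉ X ∪ Y ∪ Z)
    (hant : v ∈ G.Ant (X ∪ Y ∪ Z)) : G.MSep X Y (Z ∪ {v}) := by
  intro x hx y hy hconn
  rcases mconn_iff_TW.mp hconn with rfl | ⟨a, b, t⟩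
  · exact Set.disjoint_left.mp hXY hx hy
  have hvx : v ≠ x := fun h => hv (Or.inl (Or.inl (h ▸ hx)))
  have hvy : v ≠ y := fun h => hv (Or.inl (Or.inr (h ▸ hy)))
  have hvZ : v ∉ Z := fun h => hv (Or.inr h)
  rcases t.firstV hvx with t0 | ⟨c, d, hcd, pre, _⟩
  · exact hZ x hx y hy (mconn_iff_TW.mpr (Or.inr ⟨a, b, t0⟩))
  rcases t.lastV hvy with t0 | ⟨c', d', hcd', _, suf⟩
  · exact hZ x hx y hy (mconn_iff_TW.mpr (Or.inr ⟨a, b, t0⟩))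
  have harr := pre.arrow_end hcd.1
  obtain ⟨t0, ht0, hantv⟩ := hant
  have hdir := anterior_dir_of_arrow hAG hantv harr
  rcases dir_reach_first hdir ht0 with hvB | ⟨t', ht', hdt⟩
  · exact hv hvB
  have hZB : Z ⊆ X ∪ Y ∪ Z := fun _ h => Or.inr h
  rcases ht' with (ht' | ht') | ht'
  · -- t' ∈ X : walk t' → y
    have w1 : TW G Z t' True b y :=
      (hdt.toTW_bwd hZB).append (iff_of_false (fun hh => hh.1) hvZ) suf
    exact hZ t' ht' y hy (mconn_iff_TW.mpr (Or.inr ⟨_, _, w1⟩))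
  · -- t' ∈ Y : walk x → t'
    have w1 : TW G Z x a True t' :=
      pre.append (iff_of_false (fun hh => hh.2) hvZ) (hdt.toTW_fwd hZB)
    exact hZ x hx t' ht' (mconn_iff_TW.mpr (Or.inr ⟨_, _, w1⟩))
  · -- t' ∈ Z : detour through t'
    have w1 : TW G Z x a b y :=
      ((pre.append (iff_of_false (fun hh => hh.2) hvZ) (hdt.toTW_fwd hZB)).append
        (iff_of_true ⟨trivial, trivial⟩ ht') (hdt.toTW_bwd hZB)).append
        (iff_of_false (fun hh => hh.1) hvZ) suf
    exact hZ x hx y hy (mconn_iff_TW.mpr (Or.inr ⟨_, _, w1⟩))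

/-- When no node of `S` is an anterior of `X ∪ Y ∪ Z`, adding a minimal node
of `S` to the m-separator `Z` keeps it an m-separator. -/
lemma msep_case2 (hAG : G.IsAG) {X Y Z : Set V} {S : Finset V} (hXY : Disjoint X Y)
    (hZ : G.MSep X Y Z) (hZS : G.MSep X Y (Z ∪ ↑S))
    (hnoant : ∀ s ∈ S, s ∉ G.Ant (X ∪ Y ∪ Z))
    (hdisj : Disjoint (↑S : Set V) (Z ∪ X ∪ Y))
    {v : V} (hvS : v ∈ S)
    (hmin : ∀ s ∈ S, G.Anterior s v → G.Anterior v s) :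
    G.MSep X Y (Z ∪ {v}) := by
  intro x hx y hy hconn
  rcases mconn_iff_TW.mp hconn with rfl | ⟨a, b, t⟩
  · exact Set.disjoint_left.mp hXY hx hy
  have hvZXY : v ∉ Z ∪ X ∪ Y :=
    Set.disjoint_left.mp hdisj (Finset.mem_coe.mpr hvS)
  have hvx : v ≠ x := fun h => hvZXY (Or.inl (Or.inr (h ▸ hx)))
  -- an arrowhead at v
  rcases t.firstV hvx with t0 | ⟨c, d, hcd, pre, _⟩
  · exact hZ x hx y hy (mconn_iff_TW.mpr (Or.inr ⟨a, b, t0⟩))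
  have harr := pre.arrow_end hcd.1
  -- find an S-noncollider on the trail, or transfer to Z ∪ S
  rcases t.transfer (Z2 := Z ∪ ↑S) with t0 | ⟨s, c2, d2, hne, hcd2, pre2, suf2⟩
  · exact hZS x hx y hy (mconn_iff_TW.mpr (Or.inr ⟨a, b, t0⟩))
  have hsub : s ∈ Z ∪ {v} → s ∈ Z ∪ ↑S := by
    rintro (h | h)
    · exact Or.inl h
    · rw [Set.mem_singleton_iff] at h
      exact Or.inr (by rw [h]; exact Finset.mem_coe.mpr hvS)
  have hs1 : s ∉ Z ∪ {v} := fun h => hne (iff_of_true h (hsub h))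
  have hs2 : s ∈ Z ∪ ↑S := by
    by_contra h2; exact hne (iff_of_false hs1 h2)
  have hsS : s ∈ S := by
    rcases hs2 with h | h
    · exact absurd (Or.inl h) hs1
    · exact Finset.mem_coe.mp h
  have hsvne : s ≠ v := fun h => hs1 (Or.inr (by rw [h]; rfl))
  have hncd : ¬(c2 ∧ d2) := fun h => hs1 (hcd2.mp h)
  -- s is an anterior of v
  have hsant : s ∈ G.Ant ((Z ∪ {v}) ∪ {x}) ∨ s ∈ G.Ant ((Z ∪ {v}) ∪ {y}) := by
    rcases not_and_or.mp hncd with hc2 | hd2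
    · exact Or.inl (pre2.symm.tail_ant hAG hc2)
    · exact Or.inr (suf2.tail_ant hAG hd2)
  have hAnt_sv : G.Anterior s v := by
    have hget : ∀ t0 : V, t0 ∈ Z ∪ {v} ∪ {x} ∨ t0 ∈ Z ∪ {v} ∪ {y} →
        G.Anterior s t0 → G.Anterior s v := by
      rintro t0 ht0 hst
      have ht0' : t0 ∈ Z ∨ t0 = v ∨ (t0 ∈ X ∪ Y) := by
        rcases ht0 with ((h | h) | h) | ((h | h) | h)
        · exact Or.inl h
        · exact Or.inr (Or.inl (Set.mem_singleton_iff.mp h))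
        · exact Or.inr (Or.inr (Or.inl (Set.mem_singleton_iff.mp h ▸ hx)))
        · exact Or.inl h
        · exact Or.inr (Or.inl (Set.mem_singleton_iff.mp h))
        · exact Or.inr (Or.inr (Or.inr (Set.mem_singleton_iff.mp h ▸ hy)))
      rcases ht0' with h | h | h
      · exact absurd ⟨t0, Or.inr h, hst⟩ (hnoant s hsS)
      · exact h ▸ hst
      · exact absurd ⟨t0, Or.inl h, hst⟩ (hnoant s hsS)
    rcases hsant with ⟨t0, ht0, hst⟩ | ⟨t0, ht0, hst⟩
    · exact hget t0 (Or.inl ht0) hst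
    · exact hget t0 (Or.inr ht0) hst
  exact no_ant_cycle hAG (hmin s hsS hAnt_sv) hAnt_sv hsvne.symm harr

end AuxChain4
section AuxChain5

open MixedGraph

variable {V : Type u} {G : MixedGraph V}

lemma exists_preorder_min (R : V → V → Prop)
    (hrefl : ∀ a, R a a) (htrans : ∀ {a b c}, R a b → R b c → R a c) :
    ∀ S : Finset V, S.Nonempty → ∃ v ∈ S, ∀ s ∈ S, R s v → R v s := by
  classical
  intro S
  induction S using Finset.strongInduction with
  | _ S ih =>
    intro hS
    obtain ⟨u, hu⟩ := hS
    by_cases h : (S.filter (fun s => R s u ∧ ¬ R u s)).Nonempty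
    · have hsub : S.filter (fun s => R s u ∧ ¬ R u s) ⊂ S := by
        refine (Finset.ssubset_iff_of_subset (Finset.filter_subset _ _)).mpr ?_
        exact ⟨u, hu, by simp [hrefl u]⟩
      obtain ⟨v, hvS', hvmin⟩ := ih _ hsub h
      have hvu : R v u ∧ ¬ R u v := (Finset.mem_filter.mp hvS').2
      refine ⟨v, (Finset.mem_filter.mp hvS').1, fun s hs hsv => ?_⟩
      have hs' : s ∈ S.filter (fun s => R s u ∧ ¬ R u s) :=
        Finset.mem_filter.mpr
          ⟨hs, htrans hsv hvu.1, fun hus => hvu.2 (htrans hus hsv)⟩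
      exact hvmin s hs' hsv
    · refine ⟨u, hu, fun s hs hsu => ?_⟩
      by_contra hus
      exact h ⟨s, Finset.mem_filter.mpr ⟨hs, hsu, hus⟩⟩

lemma step_lemma (hAG : G.IsAG) {X Y Z : Set V} {S : Finset V}
    (hXY : Disjoint X Y) (hS : S.Nonempty)
    (hdisj : Disjoint (↑S : Set V) (Z ∪ X ∪ Y))
    (hZ : G.IsMSep X Y Z) (hZS : G.IsMSep X Y (Z ∪ ↑S)) :
    ∃ v ∈ S, G.IsMSep X Y (Z ∪ {v}) := by
  classical
  have hdisj1 : ∀ v ∈ S, Disjoint (Z ∪ {v} : Set V) (X ∪ Y) := by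
    intro v hv
    rw [Set.disjoint_union_left]
    refine ⟨hZ.1, Set.disjoint_singleton_left.mpr ?_⟩
    intro h
    exact Set.disjoint_left.mp hdisj (Finset.mem_coe.mpr hv)
      (by rcases h with h | h
          · exact Or.inl (Or.inr h)
          · exact Or.inr h)
  by_cases hex : ∃ s ∈ S, s ∈ G.Ant (X ∪ Y ∪ Z)
  · obtain ⟨s, hsS, hsant⟩ := hex
    have hs' : s ∉ X ∪ Y ∪ Z := by
      intro h
      refine Set.disjoint_left.mp hdisj (Finset.mem_coe.mpr hsS) ?_
      rcases h with (h | h) | h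
      · exact Or.inl (Or.inr h)
      · exact Or.inr h
      · exact Or.inl (Or.inl h)
    exact ⟨s, hsS, hdisj1 s hsS, msep_insert_ant hAG hXY hZ.2 hs' hsant⟩
  · push_neg at hex
    obtain ⟨v, hvS, hmin⟩ := exists_preorder_min G.Anterior
      (fun a => Relation.ReflTransGen.refl)
      (fun h1 h2 => Relation.ReflTransGen.trans h1 h2) S hS
    exact ⟨v, hvS, hdisj1 v hvS,
      msep_case2 hAG hXY hZ.2 hZS.2 hex hdisj hvS hmin⟩

lemma chain_lemma (hAG : G.IsAG) {X Y : Set V} (hXY : Disjoint X Y) :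
    ∀ (n : ℕ) (S : Finset V) (Z : Set V), S.card = n →
      Disjoint (↑S : Set V) (Z ∪ X ∪ Y) →
      G.IsMSep X Y Z → G.IsMSep X Y (Z ∪ ↑S) →
      ∃ c : ℕ → Finset V,
        (∀ i ≤ n, (c i).card = i ∧ c i ⊆ S ∧ G.IsMSep X Y (Z ∪ ↑(c i))) ∧
        (∀ i < n, c i ⊂ c (i + 1)) := by
  classical
  intro n
  induction n with
  | zero =>
      intro S Z _ _ hZ _
      refine ⟨fun _ => ∅, fun i hi => ?_, fun i hi => absurd hi (Nat.not_lt_zero i)⟩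
      obtain rfl := Nat.le_zero.mp hi
      exact ⟨rfl, Finset.empty_subset S, by simpa using hZ⟩
  | succ n ih =>
      intro S Z hcard hdisj hZ hZS
      have hS : S.Nonempty := Finset.card_pos.mp (by omega)
      obtain ⟨v, hvS, hZv⟩ := step_lemma hAG hXY hS hdisj hZ hZS
      set Z' : Set V := Z ∪ {v} with hZ'def
      set S' : Finset V := S.erase v with hS'def
      have hvS' : v ∉ S' := Finset.notMem_erase v S
      have hcard' : S'.card = n := by
        rw [hS'def, Finset.card_erase_of_mem hvS, hcard]
        omega
      have hdisj' : Disjoint (↑S' : Set V) (Z' ∪ X ∪ Y) := by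
        rw [Set.disjoint_right]
        intro z hz hzS'
        have hzS : z ∈ S := Finset.mem_of_mem_erase (Finset.mem_coe.mp hzS')
        rcases hz with (hz | hz) | hz
        · rcases hz with hz | hz
          · exact Set.disjoint_left.mp hdisj (Finset.mem_coe.mpr hzS) (Or.inl (Or.inl hz))
          · exact (Finset.ne_of_mem_erase (Finset.mem_coe.mp hzS'))
              (Set.mem_singleton_iff.mp hz)
        · exact Set.disjoint_left.mp hdisj (Finset.mem_coe.mpr hzS) (Or.inl (Or.inr hz))
        · exact Set.disjoint_left.mp hdisj (Finset.mem_coe.mpr hzS) (Or.inr hz)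
      have hunion : Z' ∪ ↑S' = Z ∪ ↑S := by
        ext z
        simp only [hZ'def, hS'def, Set.mem_union, Set.mem_singleton_iff,
          Finset.coe_erase, Set.mem_diff, Finset.mem_coe]
        constructor
        · rintro ((h | h) | ⟨h, _⟩)
          · exact Or.inl h
          · exact Or.inr (h ▸ hvS)
          · exact Or.inr h
        · rintro (h | h)
          · exact Or.inl (Or.inl h)
          · by_cases hzv : z = v
            · exact Or.inl (Or.inr hzv)
            · exact Or.inr ⟨h, hzv⟩
      have hZS' : G.IsMSep X Y (Z' ∪ ↑S') := by rw [hunion]; exact hZS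
      obtain ⟨c', hc1, hc2⟩ := ih S' Z' hcard' hdisj' hZv hZS'
      refine ⟨fun i => if i = 0 then ∅ else insert v (c' (i - 1)), ?_, ?_⟩
      · intro i hi
        by_cases hi0 : i = 0
        · subst hi0
          exact ⟨by simp, by simp, by simpa using hZ⟩
        · obtain ⟨j, rfl⟩ := Nat.exists_eq_succ_of_ne_zero hi0
          have hj : j ≤ n := by omega
          obtain ⟨hcj, hsubj, hsepj⟩ := hc1 j hj
          have hvnotin : v ∉ c' j := fun h => hvS' (hsubj h)
          have h1 : (insert v (c' j)).card = j + 1 := by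
            rw [Finset.card_insert_of_notMem hvnotin, hcj]
          have h2 : insert v (c' j) ⊆ S := by
            intro z hz
            rcases Finset.mem_insert.mp hz with rfl | hz
            · exact hvS
            · exact Finset.mem_of_mem_erase (hsubj hz)
          have h3 : Z ∪ ↑(insert v (c' j)) = Z' ∪ ↑(c' j) := by
            rw [hZ'def]
            ext z
            simp only [Set.mem_union, Finset.coe_insert, Set.mem_insert_iff,
              Finset.mem_coe, Set.mem_singleton_iff]
            tauto
          have hsepj' : G.IsMSep X Y (Z ∪ ↑(insert v (c' j))) := by
            rw [← h3] at hsepj; exact hsepj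
          simp only [if_neg hi0, Nat.add_sub_cancel, Nat.succ_sub_one]
          exact ⟨h1, h2, hsepj'⟩
      · intro i hi
        by_cases hi0 : i = 0
        · subst hi0
          simp only [if_pos rfl, if_neg (Nat.one_ne_zero)]
          exact Finset.empty_ssubset.mpr ⟨v, Finset.mem_insert_self _ _⟩
        · obtain ⟨j, rfl⟩ := Nat.exists_eq_succ_of_ne_zero hi0
          have hj : j < n := by omega
          have hss := hc2 j hj
          have hvn1 : v ∉ c' (j + 1) := fun h => hvS' ((hc1 (j+1) (by omega)).2.1 h)
          simp only [if_neg hi0, if_neg (by omega : ¬ j + 1 + 1 = 0), Nat.add_sub_cancel, Nat.succ_sub_one]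
          rw [Finset.ssubset_iff_subset_ne]
          constructor
          · exact Finset.insert_subset_insert v hss.subset
          · intro heq
            obtain ⟨z, hzB, hzA⟩ := Finset.exists_of_ssubset hss
            have hz1 : z ∈ insert v (c' j) := by
              rw [heq]; exact Finset.mem_insert_of_mem hzB
            rcases Finset.mem_insert.mp hz1 with rfl | hz
            · exact hvn1 hzB
            · exact hzA hz
  
end AuxChain5

theorem statement_4 (G : MixedGraph V) (hAG : G.IsAG)
    (X Y Z : Set V) (hXY : Disjoint X Y)
    (S : Finset V) (n : ℕ) (hcard : S.card = n)
    (hS : Disjoint (↑S : Set V) (Z ∪ X ∪ Y))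
    (hZ : G.IsMSep X Y Z) (hZS : G.IsMSep X Y (Z ∪ ↑S)) :
    ∃ c : ℕ → Finset V,
      (∀ i, 1 ≤ i → i ≤ n - 1 →
        (c i).card = i ∧ c i ⊂ S ∧ G.IsMSep X Y (Z ∪ ↑(c i))) ∧
      (∀ i, 1 ≤ i → i + 1 ≤ n - 1 → c i ⊂ c (i + 1)) := by
  obtain ⟨c, hc1, hc2⟩ := chain_lemma hAG hXY n S Z hcard hS hZ hZS
  refine ⟨c, fun i h1 hi => ?_, fun i h1 hi => hc2 i (by omega)⟩
  have hin : i < n := by omega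
  obtain ⟨hcardi, hsub, hsep⟩ := hc1 i (by omega)
  refine ⟨hcardi, Finset.ssubset_iff_subset_ne.mpr ⟨hsub, ?_⟩, hsep⟩
  intro heq
  rw [heq] at hcardi
  omega
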